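/- arXiv:1910.13495 — 2 statements merged into one kernel-verified Lean document; each statement's English description precedes it below -/
import Mathlib

section
/- Let G be a group acting by homeomorphisms on a compact Hausdorff space Y whose action is minimal for a subgroup N of G, and suppose the fixed point set U = Fix_Y(t) of some t ∈ G is a nonempty clopen set. If φ : Y → X is a continuous G-equivariant map onto a compact Hausdorff G-space X, then there exist finitely many s₁,…,sₙ ∈ N with X = s₁·φ(U) ∪ ⋯ ∪ sₙ·φ(U), and hence φ(U) (which is closed) has nonempty interior and is contained in Fix_X(t). Consequently, if the G-action on X is topologically free (every Fix_X(t), t ≠ e, has empty interior), then every homeomorphism of Y given by a nontrivial element of G with clopen fixed point set has empty fixed point set. -/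
open scoped Pointwise

/-- Covering argument: if `N` acts minimally on `Y`, `U = Fix_Y t` is nonempty clopen, and
`φ : Y → X` is a continuous `G`-equivariant surjection, then finitely many `N`-translates of
`φ(U)` cover `X`, so `φ(U)` has nonempty interior and lies in `Fix_X t`; hence topological
freeness of the `G`-action on `X` forces `t = 1`. -/
theorem stmt2 {G Y X : Type*} [Group G]
    [TopologicalSpace Y] [CompactSpace Y] [T2Space Y]
    [TopologicalSpace X] [CompactSpace X] [T2Space X]
    [MulAction G Y] [MulAction G X]
    (hY : ∀ g : G, Continuous fun y : Y => g • y)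
    (hX : ∀ g : G, Continuous fun x : X => g • x)
    (N : Subgroup G)
    (hNmin : ∀ S : Set Y, S.Nonempty → IsClosed S → (∀ n ∈ N, ∀ y ∈ S, n • y ∈ S) →
      S = Set.univ)
    (t : G)
    (hUclopen : IsClopen {y : Y | t • y = y}) (hUne : {y : Y | t • y = y}.Nonempty)
    (φ : Y → X) (hφc : Continuous φ)
    (hφeq : ∀ g : G, ∀ y : Y, φ (g • y) = g • φ y)
    (hφsurj : Function.Surjective φ) :
    (∃ s : Finset G, (∀ g ∈ s, g ∈ N) ∧
        (⋃ g ∈ s, g • (φ '' {y : Y | t • y = y})) = Set.univ) ∧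
    (interior (φ '' {y : Y | t • y = y})).Nonempty ∧
    (φ '' {y : Y | t • y = y}) ⊆ {x : X | t • x = x} ∧
    ((∀ g : G, g ≠ 1 → interior {x : X | g • x = x} = ∅) → t = 1) := by
  classical
  set U : Set Y := {y : Y | t • y = y} with hU
  -- homeomorphisms of X given by elements of G
  have hgX : ∀ g : G, ∃ h : Homeomorph X X, ⇑h = fun x => g • x := by
    intro g
    exact ⟨{ toFun := fun x => g • x
             invFun := fun x => g⁻¹ • x
             left_inv := fun x => by simp
             right_inv := fun x => by simp
             continuous_toFun := hX g
             continuous_invFun := hX g⁻¹ }, rfl⟩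
  -- Step 1: translates n⁻¹ • U cover Y
  have hcoverY : (⋃ n : N, (fun y : Y => (n : G) • y) ⁻¹' U) = Set.univ := by
    by_contra h
    set S := ((⋃ n : N, (fun y : Y => (n : G) • y) ⁻¹' U))ᶜ with hS
    have hSne : S.Nonempty := by
      rw [Set.nonempty_compl]; exact h
    have hSclosed : IsClosed S := by
      apply isOpen_compl_iff.mp
      rw [compl_compl]
      exact isOpen_iUnion fun n => hUclopen.2.preimage (hY n)
    have hSinv : ∀ n ∈ N, ∀ y ∈ S, n • y ∈ S := by
      intro n hn y hy
      simp only [hS, Set.mem_compl_iff, Set.mem_iUnion, Set.mem_preimage] at hy ⊢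
      rintro ⟨m, hm⟩
      exact hy ⟨⟨(m : G) * n, mul_mem m.2 hn⟩, by simpa [mul_smul] using hm⟩
    have := hNmin S hSne hSclosed hSinv
    obtain ⟨y, hy⟩ := hUne
    have : y ∈ S := this ▸ Set.mem_univ y
    simp only [hS, Set.mem_compl_iff, Set.mem_iUnion, Set.mem_preimage] at this
    exact this ⟨(1 : N), by simpa using hy⟩
  -- finite subcover
  obtain ⟨s₀, hs₀⟩ := IsCompact.elim_finite_subcover isCompact_univ
    (fun n : N => (fun y : Y => (n : G) • y) ⁻¹' U)
    (fun n => hUclopen.2.preimage (hY n)) (hcoverY ▸ subset_rfl)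
  set s : Finset G := s₀.image (fun n : N => (n : G)⁻¹) with hsdef
  have hsN : ∀ g ∈ s, g ∈ N := by
    intro g hg
    simp only [hsdef, Finset.mem_image] at hg
    obtain ⟨n, _, rfl⟩ := hg
    exact inv_mem n.2
  have hcoverX : (⋃ g ∈ s, g • (φ '' U)) = Set.univ := by
    apply Set.eq_univ_of_forall
    intro x
    obtain ⟨y, rfl⟩ := hφsurj x
    have hy := hs₀ (Set.mem_univ y)
    simp only [Set.mem_iUnion, Set.mem_preimage] at hy
    obtain ⟨n, hns, hny⟩ := hy
    simp only [Set.mem_iUnion, exists_prop]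
    refine ⟨(n : G)⁻¹, Finset.mem_image_of_mem _ hns, ?_⟩
    refine ⟨φ ((n : G) • y), ⟨(n : G) • y, hny, rfl⟩, ?_⟩
    rw [hφeq]; simp
  have hint : (interior (φ '' U)).Nonempty := by
    have hclosed : IsCompact (φ '' U) := (hUclopen.1.isCompact).image hφc
    have : ∃ g : {g // g ∈ s}, (interior ((g : G) • (φ '' U))).Nonempty := by
      have hXne : Nonempty X := ⟨φ hUne.choose⟩
      apply nonempty_interior_of_iUnion_of_closed
      · intro g
        obtain ⟨h, hh⟩ := hgX (g : G)
        have : (g : G) • (φ '' U) = h '' (φ '' U) := by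
          rw [hh]; exact (Set.image_smul).symm
        rw [this]
        exact (hclosed.image h.continuous).isClosed
      · rw [← hcoverX]
        ext x
        simp only [Set.mem_iUnion, Subtype.exists, exists_prop]
    obtain ⟨g, x, hx⟩ := this
    obtain ⟨h, hh⟩ := hgX (g : G)
    have himg : (g : G) • (φ '' U) = h '' (φ '' U) := by
      rw [hh]; exact (Set.image_smul).symm
    rw [himg, ← h.image_interior] at hx
    obtain ⟨x', hx', -⟩ := hx
    exact ⟨x', hx'⟩
  have hsub : (φ '' U) ⊆ {x : X | t • x = x} := by
    rintro x ⟨y, hy, rfl⟩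
    show t • φ y = φ y
    rw [← hφeq, hy]
  refine ⟨⟨s, hsN, hcoverX⟩, hint, hsub, ?_⟩
  intro htf
  by_contra ht
  have h1 := htf t ht
  have h2 := interior_mono hsub
  rw [h1, Set.subset_empty_iff] at h2
  exact hint.ne_empty h2
end

section
/- Every homeomorphism of an extremally disconnected compact Hausdorff space has clopen fixed point set (Frolík's theorem, statement only in the special case needed: if f : X → X is a homeomorphism of an extremally disconnected compact Hausdorff space, then {x ∈ X : f x = x} is clopen). -/
/-- Frolík's theorem: the fixed point set of a homeomorphism of an extremally disconnected
compact Hausdorff space is clopen. -/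
theorem stmt3 {X : Type*} [TopologicalSpace X] [CompactSpace X] [T2Space X]
    [ExtremallyDisconnected X] (f : X ≃ₜ X) :
    IsClopen {x : X | f x = x} := by
  set S : Set (Set X) := {U | IsOpen U ∧ Disjoint U (f '' U)} with hS
  obtain ⟨U, hUmax⟩ : ∃ U, Maximal (· ∈ S) U := by
    apply zorn_subset
    intro c hcS hchain
    refine ⟨⋃₀ c, ⟨isOpen_sUnion fun s hs => (hcS hs).1, ?_⟩, fun s hs => Set.subset_sUnion_of_mem hs⟩
    rw [Set.disjoint_left]
    rintro x ⟨A, hAc, hxA⟩ ⟨y, ⟨B, hBc, hyB⟩, hfy⟩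
    rcases hchain.total hAc hBc with h | h
    · exact Set.disjoint_left.mp (hcS hBc).2 (h hxA) ⟨y, hyB, hfy⟩
    · exact Set.disjoint_left.mp (hcS hAc).2 hxA ⟨y, h hyB, hfy⟩
  obtain ⟨hUopen, hUdisj⟩ := hUmax.1
  set V := closure U with hV
  have hVclopen : IsClopen V := ⟨isClosed_closure, ExtremallyDisconnected.open_closure U hUopen⟩
  have hfUopen : IsOpen (f '' U) := f.isOpenMap U hUopen
  have hCopen : IsOpen (closure (f '' U)) := ExtremallyDisconnected.open_closure _ hfUopen
  have h1 : Disjoint U (closure (f '' U)) := hUdisj.closure_right hUopen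
  have h2 : Disjoint V (closure (f '' U)) := by
    rw [Set.disjoint_left] at h1 ⊢
    have hsub : V ⊆ (closure (f '' U))ᶜ :=
      closure_minimal (fun y hy hmem => h1 hy hmem) hCopen.isClosed_compl
    exact fun x hx => hsub hx
  have hfV : f '' V ⊆ closure (f '' U) := by
    simpa using image_closure_subset_closure_image (f := (f : X → X)) (s := U) f.continuous
  have hVfV : Disjoint V (f '' V) := Set.disjoint_left.mpr fun x hx hmem => 
    Set.disjoint_left.mp h2 hx (hfV hmem)
  -- K = V ∪ f '' V ∪ f ⁻¹' V is clopen
  set K := V ∪ f '' V ∪ f ⁻¹' V with hK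
  have hfVclopen : IsClopen (f '' V) :=
    ⟨(f.isClosedMap) V hVclopen.1, f.isOpenMap V hVclopen.2⟩
  have hpreclopen : IsClopen (f ⁻¹' V) := hVclopen.preimage f.continuous
  have hKclopen : IsClopen K := (hVclopen.union hfVclopen).union hpreclopen
  have hfix : {x : X | f x = x} = Kᶜ := by
    ext x
    simp only [Set.mem_setOf_eq, Set.mem_compl_iff, hK, Set.mem_union, Set.mem_preimage]
    constructor
    · rintro hfx ((h | h) | h)
      · exact Set.disjoint_left.mp hVfV h ⟨x, h, hfx⟩
      · obtain ⟨y, hyV, hyx⟩ := h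
        have : y = x := f.injective (by rw [hyx, hfx])
        subst this
        exact Set.disjoint_left.mp hVfV hyV ⟨y, hyV, hfx⟩
      · rw [hfx] at h
        exact Set.disjoint_left.mp hVfV h ⟨x, h, hfx⟩
    · intro hx
      by_contra hfx
      push_neg at hx
      obtain ⟨⟨hxV, hxfV⟩, hxpre⟩ := hx
      -- separate x and f x
      obtain ⟨A, B, hAopen, hBopen, hxA, hfxB, hAB⟩ := t2_separation (show x ≠ f x from fun h => hfx h.symm)
      set O := A ∩ f ⁻¹' B ∩ Kᶜ with hO
      have hOopen : IsOpen O :=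
        ((hAopen.inter (hBopen.preimage f.continuous)).inter hKclopen.1.isOpen_compl)
      have hxO : x ∈ O := by
        refine ⟨⟨hxA, hfxB⟩, ?_⟩
        simp only [hK, Set.mem_compl_iff, Set.mem_union, Set.mem_preimage]
        tauto
      have hOdisj : Disjoint O (f '' O) := by
        rw [Set.disjoint_left]
        rintro z ⟨⟨hzA, _⟩, _⟩ ⟨w, ⟨⟨_, hwB⟩, _⟩, hwz⟩
        exact Set.disjoint_left.mp hAB hzA (hwz ▸ hwB)
      have hUO : U ∪ O ∈ S := by
        refine ⟨hUopen.union hOopen, ?_⟩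
        rw [Set.image_union, Set.disjoint_union_left, Set.disjoint_union_right,
          Set.disjoint_union_right]
        refine ⟨⟨hUdisj, ?_⟩, ?_, hOdisj⟩
        · -- Disjoint U (f '' O) : O ⊆ Kᶜ ⊆ (f⁻¹' V)ᶜ so f '' O ⊆ Vᶜ, U ⊆ V
          rw [Set.disjoint_left]
          rintro z hzU ⟨w, ⟨_, hwK⟩, hwz⟩
          apply hwK
          simp only [hK, Set.mem_union, Set.mem_preimage]
          right
          rw [hwz]
          exact subset_closure hzU
        · -- Disjoint O (f '' U) : f '' U ⊆ f '' V, O ⊆ (f '' V)ᶜ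
          rw [Set.disjoint_left]
          rintro z ⟨_, hzK⟩ ⟨w, hwU, hwz⟩
          apply hzK
          simp only [hK, Set.mem_union]
          left; right
          exact ⟨w, subset_closure hwU, hwz⟩
      have hOsub : O ⊆ U := by
        have := hUmax.2 hUO Set.subset_union_left
        exact Set.union_subset_iff.mp this |>.2
      exact hxV (subset_closure (hOsub hxO))
  rw [hfix]
  exact hKclopen.compl
end
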